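/- Let A be a finite set of integers with φ(A) ≤ k, and suppose A₁, …, A_{k+1} are pairwise disjoint subsets of A each of size at least k+2. Then there exist 1 ≤ i < j ≤ k+1 and elements aᵢ ∈ Aᵢ, aⱼ ∈ Aⱼ with aᵢ + aⱼ ∈ A. -/
import Mathlib


/-- `phi A` is the maximum cardinality of a subset `B ⊆ A` that is sum-avoiding in `A`. -/
def phi (A : Finset ℤ) : ℕ :=
  ((A.powerset).filter (fun B => ∀ b₁ ∈ B, ∀ b₂ ∈ B, b₁ ≠ b₂ → b₁ + b₂ ∉ A)).sup Finset.card

theorem disjoint_pigeonhole_int (k : ℕ) (A : Finset ℤ) (hphi : phi A ≤ k)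
    (As : Fin (k + 1) → Finset ℤ)
    (hdisj : ∀ i j, i ≠ j → Disjoint (As i) (As j))
    (hsub : ∀ i, As i ⊆ A)
    (hcard : ∀ i, k + 2 ≤ (As i).card) :
    ∃ i j : Fin (k + 1), i < j ∧ ∃ a ∈ As i, ∃ b ∈ As j, a + b ∈ A := by
  by_contra h
  push_neg at h
  have hne : ∀ i, (As i).Nonempty := fun i => Finset.card_pos.mp (by have := hcard i; omega)
  choose a ha using hne
  have hainj : Function.Injective a := by
    intro i j hij
    by_contra hne'
    exact Finset.disjoint_left.mp (hdisj i j hne') (ha i) (hij ▸ ha j)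
  set B := Finset.image a Finset.univ with hB
  have hBcard : B.card = k + 1 := by
    rw [hB, Finset.card_image_of_injective _ hainj, Finset.card_univ, Fintype.card_fin]
  have hBmem : B ∈ (A.powerset).filter
      (fun B => ∀ b₁ ∈ B, ∀ b₂ ∈ B, b₁ ≠ b₂ → b₁ + b₂ ∉ A) := by
    rw [Finset.mem_filter, Finset.mem_powerset]
    constructor
    · intro x hx
      simp only [hB, Finset.mem_image] at hx
      obtain ⟨i, _, rfl⟩ := hx
      exact hsub i (ha i)
    · intro b₁ hb₁ b₂ hb₂ hneq
      simp only [hB, Finset.mem_image] at hb₁ hb₂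
      obtain ⟨i, _, rfl⟩ := hb₁
      obtain ⟨j, _, rfl⟩ := hb₂
      have hij : i ≠ j := fun e => hneq (by rw [e])
      rcases lt_or_gt_of_ne hij with h' | h'
      · exact h i j h' _ (ha i) _ (ha j)
      · rw [add_comm]
        exact h j i h' _ (ha j) _ (ha i)
  have hle : k + 1 ≤ phi A := hBcard ▸ Finset.le_sup hBmem
  omega
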